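/- arXiv:0807.4904 — 6 statements merged into one kernel-verified Lean document; each statement's English description precedes it below -/
import Mathlib

section
/- Let f : ℕ → (0,∞) be any function. Define μ_k = (1/(1+f(k))) * ∏_{l=0}^{k-1} f(l)/(1+f(l)) for k ∈ ℕ. If f(k) ≤ k+1 for all k, then ∑_{k=0}^∞ μ_k = 1, i.e. (μ_k) is a sequence of probability weights. -/
/-- The limiting degree distribution weights sum to one. -/
theorem stmt0 (f : ℕ → ℝ) (hpos : ∀ k, 0 < f k) (hle : ∀ k : ℕ, f k ≤ k + 1) :
    HasSum (fun k => (1 / (1 + f k)) * ∏ l ∈ Finset.range k, f l / (1 + f l)) 1 := by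
  have hd : ∀ k, (0:ℝ) < 1 + f k := fun k => by linarith [hpos k]
  have hnn : ∀ k, 0 ≤ (1 / (1 + f k)) * ∏ l ∈ Finset.range k, f l / (1 + f l) := by
    intro k
    exact mul_nonneg (one_div_nonneg.mpr (hd k).le) (Finset.prod_nonneg fun l _ =>
      div_nonneg (hpos l).le (hd l).le)
  rw [hasSum_iff_tendsto_nat_of_nonneg hnn]
  have key : ∀ n, ∑ k ∈ Finset.range n, (1 / (1 + f k)) * ∏ l ∈ Finset.range k, f l / (1 + f l)
      = 1 - ∏ l ∈ Finset.range n, f l / (1 + f l) := by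
    intro n
    induction n with
    | zero => simp
    | succ n ih =>
      rw [Finset.sum_range_succ, Finset.prod_range_succ, ih]
      have h : f n / (1 + f n) = 1 - 1 / (1 + f n) := by
        field_simp [(hd n).ne']
        ring
      rw [h]
      ring
  simp only [key]
  have h0 : Filter.Tendsto (fun n => ∏ l ∈ Finset.range n, f l / (1 + f l))
      Filter.atTop (nhds 0) := by
    have hub : ∀ n, ∏ l ∈ Finset.range n, f l / (1 + f l) ≤ 1 / (n + 1) := by
      intro n
      induction n with
      | zero => simp
      | succ n ih =>
        rw [Finset.prod_range_succ]
        have h1 : f n / (1 + f n) ≤ (n + 1) / (n + 2) := by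
          rw [div_le_div_iff₀ (hd n) (by positivity)]
          nlinarith [hle n, hpos n]
        calc (∏ l ∈ Finset.range n, f l / (1 + f l)) * (f n / (1 + f n))
            ≤ (1 / (n + 1)) * ((n + 1) / (n + 2)) := by
              apply mul_le_mul ih h1 (div_nonneg (hpos n).le (hd n).le)
              positivity
          _ = 1 / (↑(n + 1) + 1) := by
              rw [div_mul_div_comm, one_mul]
              rw [div_eq_div_iff (by positivity) (by positivity)]
              push_cast
              ring
    have hlb : ∀ n, (0:ℝ) ≤ ∏ l ∈ Finset.range n, f l / (1 + f l) := fun n =>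
      Finset.prod_nonneg fun l _ => div_nonneg (hpos l).le (hd l).le
    refine squeeze_zero hlb hub ?_
    exact tendsto_one_div_add_atTop_nhds_zero_nat
  have := Filter.Tendsto.const_sub (1:ℝ) h0
  simpa using this
end

section
/- Suppose f(k) ∼ γ·k^α as k → ∞, for 0 < α < 1 and γ > 0, and let μ_k = (1/(1+f(k))) ∏_{l=0}^{k-1} f(l)/(1+f(l)). Then log μ_k ∼ -(1/γ)·(1/(1-α))·k^{1-α} as k → ∞, i.e. the asymptotic degree distribution has stretched exponential tails. -/
open Filter Asymptotics Finset

/-- Slope of `x ↦ (1+x)^p` at `0` tends to `p`. -/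
private lemma slope_rpow_aux (p : ℝ) :
    Filter.Tendsto (fun x : ℝ => ((1 + x) ^ p - 1) / x) (nhdsWithin 0 {0}ᶜ) (nhds p) := by
  have h2 : HasDerivAt (fun y : ℝ => y ^ p) (p * (1 : ℝ) ^ (p - 1)) 1 :=
    Real.hasDerivAt_rpow_const (Or.inl one_ne_zero)
  have h3 : HasDerivAt (fun x : ℝ => 1 + x) 1 0 := by
    simpa using (hasDerivAt_id (0 : ℝ)).const_add 1
  have h1 : HasDerivAt (fun x : ℝ => (1 + x) ^ p) p 0 := by
    have h2' : HasDerivAt (fun y : ℝ => y ^ p) (p * (1 : ℝ) ^ (p - 1)) ((fun x : ℝ => 1 + x) 0) :=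
      by simpa using h2
    have := h2'.comp 0 h3
    simp only [Real.one_rpow, mul_one] at this
    exact this
  have := hasDerivAt_iff_tendsto_slope.1 h1
  refine this.congr' ?_
  filter_upwards [self_mem_nhdsWithin] with x hx
  simp [slope_def_field]

/-- Slope of `x ↦ log (1+x)` at `0` tends to `1`. -/
private lemma slope_log_aux :
    Filter.Tendsto (fun x : ℝ => Real.log (1 + x) / x) (nhdsWithin 0 {0}ᶜ) (nhds 1) := by
  have h2 : HasDerivAt Real.log (1 : ℝ)⁻¹ 1 := Real.hasDerivAt_log one_ne_zero
  have h3 : HasDerivAt (fun x : ℝ => 1 + x) 1 0 := by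
    simpa using (hasDerivAt_id (0 : ℝ)).const_add 1
  have h1 : HasDerivAt (fun x : ℝ => Real.log (1 + x)) 1 0 := by
    have h2' : HasDerivAt Real.log (1 : ℝ)⁻¹ ((fun x : ℝ => 1 + x) 0) := by simpa using h2
    have := h2'.comp 0 h3
    simp only [inv_one, mul_one] at this
    exact this
  have := hasDerivAt_iff_tendsto_slope.1 h1
  refine this.congr' ?_
  filter_upwards [self_mem_nhdsWithin] with x hx
  simp [slope_def_field]

/-- Stretched exponential tails of the limiting degree distribution for
`f(k) ∼ γ k^α`, `0 < α < 1`. -/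
theorem stmt2 (f : ℕ → ℝ) (hpos : ∀ k, 0 < f k) (γ α : ℝ) (hγ : 0 < γ)
    (hα0 : 0 < α) (hα1 : α < 1)
    (hf : Filter.Tendsto (fun k : ℕ => f k / (γ * (k : ℝ) ^ α)) Filter.atTop (nhds 1))
    (μ : ℕ → ℝ)
    (hμ : ∀ k, μ k = (1 / (1 + f k)) * ∏ l ∈ Finset.range k, f l / (1 + f l)) :
    Filter.Tendsto
      (fun k : ℕ => Real.log (μ k) / (-(1 / γ) * (1 / (1 - α)) * (k : ℝ) ^ (1 - α)))
      Filter.atTop (nhds 1) := by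
  set p : ℝ := 1 - α with hpdef
  have hp : 0 < p := by simp [hpdef]; linarith
  set c : ℝ := γ⁻¹ * p⁻¹ with hcdef
  have hc : 0 < c := by positivity
  set u : ℕ → ℝ := fun l => Real.log (1 + (f l)⁻¹) with hudef
  set d : ℕ → ℝ := fun l => c * (((l : ℝ) + 1) ^ p - (l : ℝ) ^ p) with hddef
  have hd_pos : ∀ l, 0 < d l := by
    intro l
    have : ((l : ℝ)) ^ p < ((l : ℝ) + 1) ^ p :=
      Real.rpow_lt_rpow (Nat.cast_nonneg l) (lt_add_one _) hp
    have := sub_pos.2 this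
    positivity
  -- the prefactor tends to infinity
  have hw : Filter.Tendsto (fun l : ℕ => γ * (l : ℝ) ^ α) atTop atTop :=
    ((tendsto_rpow_atTop hα0).comp tendsto_natCast_atTop_atTop).const_mul_atTop hγ
  have hw_ne : ∀ᶠ l : ℕ in atTop, γ * (l : ℝ) ^ α ≠ 0 := by
    filter_upwards [hw.eventually_gt_atTop 0] with l hl using hl.ne'
  -- f tends to infinity
  have hfa : Filter.Tendsto f atTop atTop := by
    have := Filter.Tendsto.pos_mul_atTop one_pos hf hw
    refine this.congr' ?_
    filter_upwards [hw_ne] with l hl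
    exact div_mul_cancel₀ (f l) hl
  have hx0 : Filter.Tendsto (fun l : ℕ => (f l)⁻¹) atTop (nhdsWithin 0 {0}ᶜ) := by
    refine tendsto_nhdsWithin_of_tendsto_nhds_of_eventually_within _
      (tendsto_inv_atTop_zero.comp hfa) ?_
    filter_upwards with l
    exact inv_ne_zero (hpos l).ne'
  -- u l * (γ l^α) → 1
  have h1a : Filter.Tendsto (fun l : ℕ => Real.log (1 + (f l)⁻¹) / (f l)⁻¹) atTop (nhds 1) :=
    slope_log_aux.comp hx0
  have h1b : Filter.Tendsto (fun l : ℕ => γ * (l : ℝ) ^ α / f l) atTop (nhds 1) := by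
    have := hf.inv₀ one_ne_zero
    simp only [inv_div, inv_one] at this
    exact this
  have h1 : Filter.Tendsto (fun l : ℕ => u l * (γ * (l : ℝ) ^ α)) atTop (nhds 1) := by
    have := h1a.mul h1b
    rw [one_mul] at this
    refine this.congr' ?_
    filter_upwards with l
    have hfl : f l ≠ 0 := (hpos l).ne'
    simp only [hudef]
    rw [div_eq_mul_inv, inv_inv, div_eq_mul_inv, mul_mul_mul_comm, mul_inv_cancel₀ hfl, mul_one]
  -- d l * (γ l^α) → 1
  have h2a : Filter.Tendsto
      (fun l : ℕ => ((1 + ((l : ℝ))⁻¹) ^ p - 1) / ((l : ℝ))⁻¹) atTop (nhds p) := by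
    refine (slope_rpow_aux p).comp ?_
    refine tendsto_nhdsWithin_of_tendsto_nhds_of_eventually_within _
      (tendsto_inv_atTop_zero.comp tendsto_natCast_atTop_atTop) ?_
    filter_upwards [eventually_ge_atTop 1] with l hl
    have : (0 : ℝ) < (l : ℝ) := by exact_mod_cast Nat.lt_of_lt_of_le Nat.zero_lt_one hl
    exact inv_ne_zero this.ne'
  have h2 : Filter.Tendsto (fun l : ℕ => d l * (γ * (l : ℝ) ^ α)) atTop (nhds 1) := by
    have := h2a.const_mul p⁻¹
    rw [inv_mul_cancel₀ hp.ne'] at this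
    refine this.congr' ?_
    filter_upwards [eventually_ge_atTop 1] with l hl
    have hx : (0 : ℝ) < (l : ℝ) := by exact_mod_cast Nat.lt_of_lt_of_le Nat.zero_lt_one hl
    have hxp : (0 : ℝ) < (l : ℝ) ^ p := Real.rpow_pos_of_pos hx p
    have hdiv : (1 + ((l : ℝ))⁻¹) ^ p = ((l : ℝ) + 1) ^ p / (l : ℝ) ^ p := by
      rw [show (1 + ((l : ℝ))⁻¹) = ((l : ℝ) + 1) / (l : ℝ) by field_simp]
      exact Real.div_rpow (x := (l : ℝ) + 1) (y := (l : ℝ)) (by positivity) hx.le p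
    have hxx : (l : ℝ) ^ p * (l : ℝ) ^ α = (l : ℝ) := by
      rw [← Real.rpow_add hx, hpdef]
      norm_num
    rw [hddef, hcdef, hdiv, div_eq_mul_inv, inv_inv,
      show ((l : ℝ) + 1) ^ p / (l : ℝ) ^ p - 1
          = (((l : ℝ) + 1) ^ p - (l : ℝ) ^ p) / (l : ℝ) ^ p by
        rw [sub_div, div_self hxp.ne'],
      show (((l : ℝ) + 1) ^ p - (l : ℝ) ^ p) / (l : ℝ) ^ p * (l : ℝ)
          = (((l : ℝ) + 1) ^ p - (l : ℝ) ^ p) * (l : ℝ) ^ α by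
        rw [div_mul_eq_mul_div, div_eq_iff hxp.ne', mul_assoc,
          mul_comm ((l : ℝ) ^ α) ((l : ℝ) ^ p), hxx]]
    field_simp
  -- u ~ d
  have hud : u ~[atTop] d := by
    rw [Asymptotics.isEquivalent_iff_tendsto_one
      (by filter_upwards with l; exact (hd_pos l).ne')]
    have := h1.div h2 one_ne_zero
    rw [div_one] at this
    refine this.congr' ?_
    filter_upwards [hw_ne] with l hl
    simp only [Pi.div_apply]
    rw [mul_div_mul_right _ _ hl]
  -- the sum of d telescopes
  have hsum_d : ∀ k : ℕ, ∑ l ∈ range k, d l = c * (k : ℝ) ^ p := by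
    intro k
    have : ∑ l ∈ range k, (((l + 1 : ℕ) : ℝ) ^ p - ((l : ℕ) : ℝ) ^ p)
        = ((k : ℝ) ^ p - ((0 : ℕ) : ℝ) ^ p) :=
      Finset.sum_range_sub (fun n : ℕ => ((n : ℝ)) ^ p) k
    simp only [Nat.cast_zero, Real.zero_rpow hp.ne'] at this
    calc ∑ l ∈ range k, d l = c * ∑ l ∈ range k, (((l : ℝ) + 1) ^ p - (l : ℝ) ^ p) := by
          rw [mul_sum]
      _ = c * (k : ℝ) ^ p := by
          rw [show (∑ l ∈ range k, (((l : ℝ) + 1) ^ p - (l : ℝ) ^ p))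
              = ∑ l ∈ range k, (((l + 1 : ℕ) : ℝ) ^ p - ((l : ℕ) : ℝ) ^ p) by
            refine Finset.sum_congr rfl fun l _ => by push_cast; ring_nf]
          rw [this]; ring
  have htend_sumd : Filter.Tendsto (fun k : ℕ => ∑ l ∈ range k, d l) atTop atTop := by
    simp only [hsum_d]
    exact (((tendsto_rpow_atTop hp).comp tendsto_natCast_atTop_atTop).const_mul_atTop hc)
  -- sum of u is equivalent to c k^p
  have hsum : (fun k : ℕ => ∑ l ∈ range k, u l) ~[atTop] (fun k : ℕ => c * (k : ℝ) ^ p) := by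
    have h := hud.isLittleO.sum_range (fun l => (hd_pos l).le) htend_sumd
    show ((fun k : ℕ => ∑ l ∈ range k, u l) - fun k : ℕ => c * (k : ℝ) ^ p)
        =o[atTop] (fun k : ℕ => c * (k : ℝ) ^ p)
    refine (h.congr' ?_ ?_)
    · filter_upwards with k
      simp [Finset.sum_sub_distrib, hsum_d k]
    · filter_upwards with k
      exact hsum_d k
  -- log (1 + f k) is little-o of c k^p
  have hlog : (fun k : ℕ => Real.log (1 + f k)) =o[atTop] (fun k : ℕ => c * (k : ℝ) ^ p) := by
    have hkp : Filter.Tendsto (fun k : ℕ => (k : ℝ) ^ p) atTop atTop :=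
      (tendsto_rpow_atTop hp).comp tendsto_natCast_atTop_atTop
    have hone : (fun _ : ℕ => (1 : ℝ)) =o[atTop] (fun k : ℕ => (k : ℝ) ^ p) := by
      refine Asymptotics.isLittleO_const_left.2 (Or.inr ?_)
      exact tendsto_abs_atTop_atTop.comp hkp
    have hA : Filter.Tendsto (fun k : ℕ => Real.log ((1 + f k) / (k : ℝ) ^ α)) atTop
        (nhds (Real.log γ)) := by
      have hq : Filter.Tendsto (fun k : ℕ => (1 + f k) / (γ * (k : ℝ) ^ α)) atTop (nhds 1) := by
        have hz : Filter.Tendsto (fun k : ℕ => (γ * (k : ℝ) ^ α)⁻¹) atTop (nhds 0) :=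
          tendsto_inv_atTop_zero.comp hw
        have := hz.add hf
        rw [zero_add] at this
        refine this.congr' ?_
        filter_upwards [hw_ne] with k hk
        field_simp
      have hq2 : Filter.Tendsto (fun k : ℕ => (1 + f k) / (k : ℝ) ^ α) atTop (nhds γ) := by
        have := hq.const_mul γ
        rw [mul_one] at this
        refine this.congr' ?_
        filter_upwards [hw_ne] with k hk
        have hk2 : ((k : ℝ)) ^ α ≠ 0 := right_ne_zero_of_mul hk
        field_simp
      exact (Real.continuousAt_log hγ.ne').tendsto.comp hq2
    have hA' : (fun k : ℕ => Real.log ((1 + f k) / (k : ℝ) ^ α))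
        =o[atTop] (fun k : ℕ => (k : ℝ) ^ p) :=
      (hA.isBigO_one ℝ).trans_isLittleO hone
    have hB : (fun k : ℕ => α * Real.log (k : ℝ)) =o[atTop] (fun k : ℕ => (k : ℝ) ^ p) :=
      (((isLittleO_log_rpow_atTop hp).comp_tendsto
        tendsto_natCast_atTop_atTop)).const_mul_left α
    have hAB := hA'.add hB
    have : (fun k : ℕ => Real.log (1 + f k)) =o[atTop] (fun k : ℕ => (k : ℝ) ^ p) := by
      refine hAB.congr' ?_ (by filter_upwards with k; rfl)
      filter_upwards [eventually_ge_atTop 1] with k hk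
      have hx : (0 : ℝ) < (k : ℝ) := by exact_mod_cast Nat.lt_of_lt_of_le Nat.zero_lt_one hk
      have h1f : (0 : ℝ) < 1 + f k := by have := hpos k; linarith
      rw [Real.log_div h1f.ne' (Real.rpow_pos_of_pos hx α).ne', Real.log_rpow hx]
      ring
    exact this.const_mul_right hc.ne'
  -- combine
  have hT : ((fun k : ℕ => ∑ l ∈ range k, u l) + fun k : ℕ => Real.log (1 + f k))
      ~[atTop] (fun k : ℕ => c * (k : ℝ) ^ p) := hsum.add_isLittleO hlog
  have hfin := (Asymptotics.isEquivalent_iff_tendsto_one (by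
      filter_upwards [eventually_ge_atTop 1] with k hk
      have hx : (0 : ℝ) < (k : ℝ) := by exact_mod_cast Nat.lt_of_lt_of_le Nat.zero_lt_one hk
      have := Real.rpow_pos_of_pos hx p
      positivity)).1 hT
  refine hfin.congr' ?_
  filter_upwards with k
  have hlogμ : Real.log (μ k) = -(∑ l ∈ range k, u l + Real.log (1 + f k)) := by
    have h1f : ∀ l, (0 : ℝ) < 1 + f l := fun l => by have := hpos l; linarith
    have hprod_ne : ∀ l ∈ range k, f l / (1 + f l) ≠ 0 := fun l _ =>
      div_ne_zero (hpos l).ne' (h1f l).ne'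
    rw [hμ k, Real.log_mul (by have := h1f k; positivity) (Finset.prod_ne_zero_iff.2 hprod_ne),
      Real.log_prod hprod_ne, one_div, Real.log_inv]
    have : ∀ l ∈ range k, Real.log (f l / (1 + f l)) = -u l := by
      intro l _
      have : f l / (1 + f l) = (1 + (f l)⁻¹)⁻¹ := by
        rw [show (1 : ℝ) + (f l)⁻¹ = (1 + f l) / f l by field_simp [(hpos l).ne']; ring, inv_div]
      rw [this, Real.log_inv, hudef]
    rw [Finset.sum_congr rfl this, Finset.sum_neg_distrib]
    ring
  simp only [Pi.div_apply, Pi.add_apply]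
  rw [hlogμ]
  rw [show -(1 / γ) * (1 / (1 - α)) * (k : ℝ) ^ (1 - α) = -(c * (k : ℝ) ^ p) by
    rw [hcdef, hpdef]; ring]
  rw [neg_div_neg_eq]
end

section
/- Let (t_i)_{i≥0} be a strictly increasing sequence of nonnegative reals with t_0 = 0 and t_i → ∞, and let λ > 0 satisfy λ·(t_i - t_{i-1}) ≤ 1 for all i ≥ 1. Let X be a discrete random variable with P(X = t_i) = λ·Δt_i · ∏_{j=1}^{i-1} (1 - λ·Δt_j), where Δt_i = t_i - t_{i-1}. Then E[X] = 1/λ and Var(X) ≤ 1/λ². -/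
open MeasureTheory Filter Finset

/-- Mean and variance of the discretized exponential holding time. -/
theorem stmt3 {Ω : Type*} [MeasureSpace Ω]
    [IsProbabilityMeasure (volume : Measure Ω)]
    (X : Ω → ℝ) (hX : Measurable X)
    (t : ℕ → ℝ) (ht0 : t 0 = 0) (hmono : StrictMono t)
    (htop : Filter.Tendsto t Filter.atTop Filter.atTop)
    (l : ℝ) (hl : 0 < l) (hstep : ∀ i : ℕ, 1 ≤ i → l * (t i - t (i - 1)) ≤ 1)
    (hdist : ∀ i : ℕ, 1 ≤ i →
      volume {ω | X ω = t i} =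
        ENNReal.ofReal (l * (t i - t (i - 1)) *
          ∏ j ∈ Finset.Icc 1 (i - 1), (1 - l * (t j - t (j - 1))))) :
    (∫ ω, X ω) = 1 / l ∧ ProbabilityTheory.variance X volume ≤ 1 / l ^ 2 := by
  have hl0 : l ≠ 0 := ne_of_gt hl
  set Δ : ℕ → ℝ := fun k => t (k + 1) - t k with hΔdef
  set Q : ℕ → ℝ := fun n => ∏ k ∈ range n, (1 - l * Δ k) with hQdef
  set p : ℕ → ℝ := fun k => l * Δ k * Q k with hpdef
  have hΔpos : ∀ k, 0 < Δ k := fun k => sub_pos.2 (hmono (Nat.lt_succ_self k))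
  have hstep' : ∀ k, l * Δ k ≤ 1 := by
    intro k
    have h := hstep (k + 1) (by omega)
    simpa using h
  have hfac_nonneg : ∀ k, 0 ≤ 1 - l * Δ k := fun k => sub_nonneg.2 (hstep' k)
  have hQnn : ∀ n, 0 ≤ Q n := fun n => Finset.prod_nonneg fun k _ => hfac_nonneg k
  have hQ0 : Q 0 = 1 := by simp [hQdef]
  have hQsucc : ∀ n, Q (n + 1) = Q n * (1 - l * Δ n) := fun n => Finset.prod_range_succ _ n
  have hp_nonneg : ∀ k, 0 ≤ p k := fun k =>
    mul_nonneg (mul_nonneg hl.le (hΔpos k).le) (hQnn k)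
  have hpQ : ∀ k, p k = Q k - Q (k + 1) := by
    intro k; rw [hpdef]; simp only; rw [hQsucc k]; ring
  have hδ : ∀ k, Δ k * Q k = p k / l := by
    intro k; rw [hpdef]; field_simp
  have ht_nonneg : ∀ n, 0 ≤ t n := fun n => ht0 ▸ hmono.monotone (Nat.zero_le n)
  have hsum_p : ∀ N, ∑ k ∈ range N, p k = 1 - Q N := by
    intro N
    calc ∑ k ∈ range N, p k = ∑ k ∈ range N, (Q k - Q (k + 1)) :=
          Finset.sum_congr rfl fun k _ => hpQ k
      _ = Q 0 - Q N := Finset.sum_range_sub' Q N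
      _ = 1 - Q N := by rw [hQ0]
  -- exponential bound on Q
  have hQ_exp : ∀ n, Q n ≤ Real.exp (-(l * t n)) := by
    intro n
    have h1 : Q n ≤ ∏ k ∈ range n, Real.exp (-(l * Δ k)) := by
      apply Finset.prod_le_prod (fun k _ => hfac_nonneg k)
      intro k _
      have := Real.add_one_le_exp (-(l * Δ k))
      linarith
    rw [← Real.exp_sum] at h1
    have h2 : ∑ k ∈ range n, -(l * Δ k) = -(l * t n) := by
      have h3 : ∑ k ∈ range n, Δ k = t n - t 0 := Finset.sum_range_sub t n
      rw [Finset.sum_neg_distrib, ← Finset.mul_sum, h3, ht0]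
      ring
    rwa [h2] at h1
  have hlt_top : Tendsto (fun n => l * t n) atTop atTop := htop.const_mul_atTop hl
  have hQ_tendsto : Tendsto Q atTop (nhds 0) := by
    refine squeeze_zero hQnn hQ_exp ?_
    exact Real.tendsto_exp_atBot.comp (tendsto_neg_atTop_atBot.comp hlt_top)
  have htQ : Tendsto (fun n => t n * Q n) atTop (nhds 0) := by
    have key : Tendsto (fun x : ℝ => x * Real.exp (-(l * x))) atTop (nhds 0) := by
      have h1 : Tendsto (fun y : ℝ => y ^ 1 * Real.exp (-y)) atTop (nhds 0) :=
        Real.tendsto_pow_mul_exp_neg_atTop_nhds_zero 1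
      have h2 : Tendsto (fun x : ℝ => (l * x) ^ 1 * Real.exp (-(l * x))) atTop (nhds 0) :=
        h1.comp (tendsto_id.const_mul_atTop hl)
      have h3 := h2.const_mul (1 / l)
      rw [mul_zero] at h3
      convert h3 using 2 with x
      field_simp
    refine squeeze_zero (fun n => mul_nonneg (ht_nonneg n) (hQnn n))
      (fun n => mul_le_mul_of_nonneg_left (hQ_exp n) (ht_nonneg n)) ?_
    exact key.comp htop
  -- partial sums of the mean
  have hterm : ∀ k, t (k + 1) * p k = p k / l + (t k * Q k - t (k + 1) * Q (k + 1)) := by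
    intro k
    rw [← hδ k]
    calc t (k + 1) * p k = t (k + 1) * (Q k - Q (k + 1)) := by rw [hpQ k]
      _ = Δ k * Q k + (t k * Q k - t (k + 1) * Q (k + 1)) := by rw [hΔdef]; ring
  have hM : ∀ N, ∑ k ∈ range N, t (k + 1) * p k = (1 - Q N) / l - t N * Q N := by
    intro N
    rw [Finset.sum_congr rfl fun k _ => hterm k, Finset.sum_add_distrib,
      Finset.sum_range_sub' (fun k => t k * Q k) N, ← Finset.sum_div, hsum_p N, ht0, hQ0]
    ring
  have hmean_hasSum : HasSum (fun k => t (k + 1) * p k) (1 / l) := by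
    rw [hasSum_iff_tendsto_nat_of_nonneg (fun k => mul_nonneg (ht_nonneg _) (hp_nonneg k))]
    have h1 : Tendsto (fun N => (1 - Q N) / l - t N * Q N) atTop (nhds ((1 - 0) / l - 0)) :=
      ((tendsto_const_nhds.sub hQ_tendsto).div_const l).sub htQ
    simp only [sub_zero] at h1
    refine Tendsto.congr (fun N => (hM N).symm) h1
  have hM_le : ∀ N, ∑ k ∈ range N, t (k + 1) * p k ≤ 1 / l := by
    intro N
    rw [hM N]
    have hq := hQnn N
    have h2 : 0 ≤ t N * Q N := mul_nonneg (ht_nonneg N) (hQnn N)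
    have h1 : (1 - Q N) / l ≤ 1 / l := by gcongr <;> linarith
    linarith
  -- second moment partial sums
  have hterm2 : ∀ k, t (k + 1) ^ 2 * p k ≤
      2 / l * (t (k + 1) * p k) + (t k ^ 2 * Q k - t (k + 1) ^ 2 * Q (k + 1)) := by
    intro k
    have h1 : (t (k + 1) + t k) * (Δ k * Q k) ≤ 2 * t (k + 1) * (Δ k * Q k) := by
      apply mul_le_mul_of_nonneg_right _ (mul_nonneg (hΔpos k).le (hQnn k))
      have := (hmono (Nat.lt_succ_self k)).le
      linarith
    have h2 : t (k + 1) ^ 2 * p k =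
        (t (k + 1) + t k) * (Δ k * Q k) + (t k ^ 2 * Q k - t (k + 1) ^ 2 * Q (k + 1)) := by
      rw [hpQ k, hΔdef]; ring
    have h3 : 2 * t (k + 1) * (Δ k * Q k) = 2 / l * (t (k + 1) * p k) := by
      rw [hδ k]; field_simp
    rw [h2, ← h3]
    linarith
  have hV_le : ∀ N, ∑ k ∈ range N, t (k + 1) ^ 2 * p k ≤ 2 / l ^ 2 := by
    intro N
    have h1 := Finset.sum_le_sum (fun k (_ : k ∈ range N) => hterm2 k)
    rw [Finset.sum_add_distrib, Finset.sum_range_sub' (fun k => t k ^ 2 * Q k) N,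
      ← Finset.mul_sum] at h1
    have h2 : 2 / l * ∑ k ∈ range N, t (k + 1) * p k ≤ 2 / l * (1 / l) :=
      mul_le_mul_of_nonneg_left (hM_le N) (by positivity)
    have h3 : 0 ≤ t N ^ 2 * Q N := mul_nonneg (sq_nonneg _) (hQnn N)
    have h4 : (2 : ℝ) / l * (1 / l) = 2 / l ^ 2 := by field_simp
    norm_num [ht0] at h1
    linarith [h1, h2, h3, h4]
  have hsq_nonneg : ∀ k, 0 ≤ t (k + 1) ^ 2 * p k :=
    fun k => mul_nonneg (sq_nonneg _) (hp_nonneg k)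
  have hsq_summable : Summable (fun k => t (k + 1) ^ 2 * p k) :=
    summable_of_sum_range_le hsq_nonneg hV_le
  have hsq_tsum_le : ∑' k, t (k + 1) ^ 2 * p k ≤ 2 / l ^ 2 :=
    Real.tsum_le_of_sum_range_le hsq_nonneg hV_le
  have hp_hasSum : HasSum p 1 := by
    rw [hasSum_iff_tendsto_nat_of_nonneg hp_nonneg]
    have h1 : Tendsto (fun N => 1 - Q N) atTop (nhds (1 - 0)) :=
      tendsto_const_nhds.sub hQ_tendsto
    simp only [sub_zero] at h1
    exact Tendsto.congr (fun N => (hsum_p N).symm) h1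
  -- distribution in terms of p
  have hA : ∀ k : ℕ, volume (X ⁻¹' {t (k + 1)}) = ENNReal.ofReal (p k) := by
    intro k
    have h := hdist (k + 1) (by omega)
    simp only [Nat.add_sub_cancel] at h
    have hprod : ∀ m : ℕ, ∏ j ∈ Finset.Icc 1 m, (1 - l * (t j - t (j - 1))) = Q m := by
      intro m
      induction m with
      | zero => simp [hQdef]
      | succ n ih =>
        rw [Finset.prod_Icc_succ_top (by omega), ih, hQdef]
        simp only
        rw [Finset.prod_range_succ]
        simp [hΔdef]
    rw [hprod k] at h
    have hset : X ⁻¹' {t (k + 1)} = {ω | X ω = t (k + 1)} := by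
      ext ω; simp
    rw [hset, h]
  set g : ℕ → ℝ := fun k => t (k + 1) with hgdef
  have hinj : Function.Injective g := by
    intro a b hab
    have := hmono.injective hab
    omega
  set s : Set ℝ := Set.range g with hsdef
  have hs_count : s.Countable := Set.countable_range _
  set ν : Measure ℝ := volume.map X with hνdef
  have hν_prob : IsProbabilityMeasure ν := Measure.isProbabilityMeasure_map hX.aemeasurable
  have hν_sing : ∀ k, ν {g k} = ENNReal.ofReal (p k) := by
    intro k
    rw [hνdef, Measure.map_apply hX (measurableSet_singleton _)]
    exact hA k
  have hdisj : Pairwise (Function.onFun Disjoint fun k => X ⁻¹' {g k}) := by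
    intro a b hab
    refine Set.disjoint_left.2 fun ω h1 h2 => ?_
    simp only [Set.mem_preimage, Set.mem_singleton_iff] at h1 h2
    exact hab (hinj (h1 ▸ h2))
  have hνs_one : ν s = 1 := by
    rw [hνdef, Measure.map_apply hX hs_count.measurableSet]
    have h1 : X ⁻¹' s = ⋃ k, X ⁻¹' {g k} := by
      rw [← Set.preimage_iUnion, Set.iUnion_singleton_eq_range]
    rw [h1, measure_iUnion hdisj fun k => hX (measurableSet_singleton _)]
    have h2 : ∀ k, volume (X ⁻¹' {g k}) = ENNReal.ofReal (p k) := hA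
    rw [tsum_congr h2, ← ENNReal.ofReal_tsum_of_nonneg hp_nonneg hp_hasSum.summable,
      hp_hasSum.tsum_eq, ENNReal.ofReal_one]
  have hνs_compl : ν sᶜ = 0 := by
    rw [measure_compl hs_count.measurableSet (measure_ne_top ν s), hνs_one, measure_univ,
      tsub_self]
  have hae_mem : ∀ᵐ x ∂ν, x ∈ s := by
    rw [ae_iff]
    exact hνs_compl
  have hres : ν.restrict s = ν := Measure.restrict_eq_self_of_ae_mem hae_mem
  -- key computation
  have key : ∀ f : ℝ → ℝ, Measurable f → (∀ k, 0 ≤ f (g k)) →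
      Summable (fun k => f (g k) * p k) →
      Integrable (fun ω => f (X ω)) volume ∧
        (∫ ω, f (X ω)) = ∑' k, f (g k) * p k := by
    intro f hf hfnn hfsum
    have hfae : 0 ≤ᵐ[ν] f := by
      filter_upwards [hae_mem] with x hx
      obtain ⟨k, rfl⟩ := hx
      exact hfnn k
    have hint : Integrable f ν := by
      refine ⟨hf.aestronglyMeasurable, ?_⟩
      rw [hasFiniteIntegral_iff_ofReal hfae]
      have h1 : ∫⁻ x, ENNReal.ofReal (f x) ∂ν = ∫⁻ x in s, ENNReal.ofReal (f x) ∂ν := by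
        rw [hres]
      rw [h1, lintegral_countable _ hs_count]
      have h2 : ∑' (a : ↑s), ENNReal.ofReal (f ↑a) * ν {(a : ℝ)} =
          ∑' k, ENNReal.ofReal (f (g k)) * ν {g k} :=
        tsum_range (fun a => ENNReal.ofReal (f a) * ν {a}) hinj
      rw [h2]
      have h3 : ∀ k, ENNReal.ofReal (f (g k)) * ν {g k} =
          ENNReal.ofReal (f (g k) * p k) := by
        intro k
        rw [hν_sing k, ← ENNReal.ofReal_mul (hfnn k)]
      rw [tsum_congr h3, ← ENNReal.ofReal_tsum_of_nonneg
        (fun k => mul_nonneg (hfnn k) (hp_nonneg k)) hfsum]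
      exact ENNReal.ofReal_lt_top
    have hint' : Integrable (fun ω => f (X ω)) volume :=
      (integrable_map_measure hf.aestronglyMeasurable hX.aemeasurable).1 (hνdef ▸ hint)
    refine ⟨hint', ?_⟩
    have h4 : (∫ ω, f (X ω)) = ∫ x, f x ∂ν := by
      rw [hνdef, integral_map hX.aemeasurable hf.aestronglyMeasurable]
    have h5 : (∫ x, f x ∂ν) = ∫ x in s, f x ∂ν := by rw [hres]
    rw [h4, h5, setIntegral_countable f hs_count hint.integrableOn]
    simp only [measureReal_def]
    have h6 : ∑' (a : ↑s), (ν {(a : ℝ)}).toReal • f ↑a =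
        ∑' k, (ν {g k}).toReal • f (g k) :=
      tsum_range (fun a => (ν {a}).toReal • f a) hinj
    rw [h6]
    refine tsum_congr fun k => ?_
    rw [hν_sing k, ENNReal.toReal_ofReal (hp_nonneg k), smul_eq_mul, mul_comm]
  obtain ⟨hint1, hval1⟩ := key id measurable_id (fun k => ht_nonneg _) hmean_hasSum.summable
  have hmean : (∫ ω, X ω) = 1 / l := by
    have := hval1
    simp only [id] at this
    rw [this, hmean_hasSum.tsum_eq]
  obtain ⟨hint2, hval2⟩ := key (fun x => x ^ 2) (measurable_id.pow_const 2)
    (fun k => sq_nonneg _) hsq_summable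
  have hmem : MemLp X 2 volume :=
    (memLp_two_iff_integrable_sq hX.aestronglyMeasurable).2 hint2
  refine ⟨hmean, ?_⟩
  rw [ProbabilityTheory.variance_eq_sub hmem]
  have hsq : (∫ ω, (X ^ 2) ω) = ∑' k, t (k + 1) ^ 2 * p k := by
    have : (∫ ω, (X ^ 2) ω) = ∫ ω, X ω ^ 2 := by
      refine integral_congr_ae (Filter.Eventually.of_forall fun ω => ?_)
      simp
    rw [this, hval2]
  rw [hsq, hmean]
  have h7 : (1 / l) ^ 2 = 1 / l ^ 2 := by rw [div_pow, one_pow]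
  rw [h7]
  have h8 : (2 : ℝ) / l ^ 2 = 1 / l ^ 2 + 1 / l ^ 2 := by ring
  linarith [hsq_tsum_le]
end

section
/- Let ξ*(t) = t - 1 - log t for t > 0. Then for any ζ > 0 and t > 0, |ξ*(ζt) - ξ*(t)| ≤ 2|ζ - 1| + |log ζ| + 2|ζ - 1|·ξ*(t). -/
/-- Stability estimate for `ξ*(t) = t - 1 - log t` under multiplicative perturbation. -/
theorem stmt5 (ζ t : ℝ) (hζ : 0 < ζ) (ht : 0 < t) :
    |((ζ * t) - 1 - Real.log (ζ * t)) - (t - 1 - Real.log t)| ≤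
      2 * |ζ - 1| + |Real.log ζ| + 2 * |ζ - 1| * (t - 1 - Real.log t) := by
  rw [Real.log_mul hζ.ne' ht.ne']
  have h1 : ((ζ * t) - 1 - (Real.log ζ + Real.log t)) - (t - 1 - Real.log t)
      = (ζ - 1) * t + (- Real.log ζ) := by ring
  rw [h1]
  have h2 : |(ζ - 1) * t + (- Real.log ζ)| ≤ |(ζ - 1) * t| + |Real.log ζ| := by
    simpa using abs_add_le ((ζ - 1) * t) (- Real.log ζ)
  have hsq : (Real.sqrt t - 2)^2 ≥ 0 := sq_nonneg _
  have hst : Real.sqrt t ^ 2 = t := Real.sq_sqrt ht.le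
  have hlog : Real.log (Real.sqrt t) ≤ Real.sqrt t - 1 :=
    Real.log_le_sub_one_of_pos (Real.sqrt_pos.mpr ht)
  have hlogt : Real.log t = 2 * Real.log (Real.sqrt t) := by
    nth_rewrite 1 [← hst]; rw [Real.log_pow]; norm_num
  have ht2 : t ≤ 2 + 2 * (t - 1 - Real.log t) := by
    rw [hlogt]; nlinarith [hsq, hst, hlog]
  have h3 : |(ζ - 1) * t| ≤ 2 * |ζ - 1| + 2 * |ζ - 1| * (t - 1 - Real.log t) := by
    rw [abs_mul, abs_of_pos ht]
    nlinarith [abs_nonneg (ζ - 1)]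
  linarith
end

section
/- Fix 0 < α < 1/2. Let A₀ be the set of absolutely continuous functions x : [0,∞) → ℝ with x(0) = 0 and max_{t∈[1/2,1]} x(t) ≥ 2·u_max, where u_max = (1/2)·(1-α)/(1-2α). Define I(x) = (1/2)∫_0^∞ (x'(t))² t^{α/(1-α)} dt. Then for every x ∈ A₀ with I(x) < ∞, I(x) ≥ u_max, with equality if and only if x(t) = ((1-α)/(1-2α))·(t^{(1-2α)/(1-α)} ∧ 1) for all t ≥ 0. -/
open MeasureTheory Set

lemma aux_ae_zero {H : ℝ → ℝ} (hH : Integrable H)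
    (h0 : ∀ a b : ℝ, a ≤ b → ∫ u in Set.Ioc a b, H u = 0) : H =ᵐ[volume] 0 := by
  set ν₁ := volume.withDensity (fun t => ENNReal.ofReal (H t)) with hν₁
  set ν₂ := volume.withDensity (fun t => ENNReal.ofReal (-H t)) with hν₂
  have hfin₁ : IsFiniteMeasure ν₁ := isFiniteMeasure_withDensity_ofReal hH.hasFiniteIntegral
  have hfin₂ : IsFiniteMeasure ν₂ := isFiniteMeasure_withDensity_ofReal hH.neg.hasFiniteIntegral
  have hkey : ∀ s : Set ℝ, MeasurableSet s →
      ∫ u in s, H u = (ν₁ s).toReal - (ν₂ s).toReal := by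
    intro s hs
    rw [hν₁, hν₂, withDensity_apply _ hs, withDensity_apply _ hs]
    exact integral_eq_lintegral_pos_part_sub_lintegral_neg_part hH.restrict
  have hν : ν₁ = ν₂ := by
    apply MeasureTheory.Measure.ext_of_Ioc' ν₁ ν₂ (fun a b _ => measure_ne_top _ _)
    intro a b hab
    have h1 := hkey (Ioc a b) measurableSet_Ioc
    rw [h0 a b hab.le] at h1
    have h2 : (ν₁ (Ioc a b)).toReal = (ν₂ (Ioc a b)).toReal := by linarith
    exact (ENNReal.toReal_eq_toReal_iff' (measure_ne_top _ _) (measure_ne_top _ _)).mp h2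
  apply hH.ae_eq_zero_of_forall_setIntegral_eq_zero
  intro s hs _
  rw [hkey s hs, hν, sub_self]

lemma aux_ae_eq_Ioc {f g : ℝ → ℝ} {a b : ℝ}
    (hf : IntegrableOn f (Set.Ioc a b)) (hg : IntegrableOn g (Set.Ioc a b))
    (h : ∀ s t : ℝ, a ≤ s → s ≤ t → t ≤ b →
      ∫ u in Set.Ioc s t, f u = ∫ u in Set.Ioc s t, g u) :
    f =ᵐ[volume.restrict (Set.Ioc a b)] g := by
  set H : ℝ → ℝ := (Set.Ioc a b).indicator (f - g) with hHdef
  have hHint : Integrable H := IntegrableOn.integrable_indicator (hf.sub hg) measurableSet_Ioc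
  have hH0 : H =ᵐ[volume] 0 := by
    apply aux_ae_zero hHint
    intro s t hst
    rw [hHdef, integral_indicator measurableSet_Ioc,
      Measure.restrict_restrict measurableSet_Ioc, Set.Ioc_inter_Ioc]
    rcases le_or_gt (min b t) (max a s) with hle | hlt
    · rw [Set.Ioc_eq_empty (not_lt.2 hle), Measure.restrict_empty, integral_zero_measure]
    · have ha' : a ≤ max a s := le_max_left _ _
      have hb' : min b t ≤ b := min_le_left _ _
      have hsub : Set.Ioc (max a s) (min b t) ⊆ Set.Ioc a b :=
        Set.Ioc_subset_Ioc ha' hb'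
      simp only [Pi.sub_apply]
      rw [integral_sub (hf.mono_set hsub) (hg.mono_set hsub)]
      rw [h (max a s) (min b t) ha' hlt.le hb', sub_self]
  filter_upwards [ae_restrict_mem measurableSet_Ioc, ae_restrict_of_ae hH0] with t ht hHt
  have : H t = f t - g t := Set.indicator_of_mem ht _
  rw [this] at hHt
  have : f t - g t = 0 := hHt
  linarith

noncomputable def zprof (β : ℝ) : ℝ → ℝ := (Set.Iic (1:ℝ)).indicator (fun u => u ^ (-β))

lemma zprof_of_le {β u : ℝ} (hu : u ≤ 1) : zprof β u = u ^ (-β) :=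
  Set.indicator_of_mem (Set.mem_Iic.mpr hu) _

lemma zprof_of_gt {β u : ℝ} (hu : 1 < u) : zprof β u = 0 :=
  Set.indicator_of_notMem (fun h => absurd (Set.mem_Iic.mp h) (not_le.mpr hu)) _

set_option maxHeartbeats 1000000 in
/-- The minimal rate on `A₀` is `u_max`, attained uniquely at the profile `z`. -/
theorem stmt9 (α : ℝ) (hα0 : 0 < α) (hα : α < 1/2)
    (x x' : ℝ → ℝ) (hx0 : x 0 = 0)
    (hftc : ∀ s t : ℝ, 0 ≤ s → s ≤ t → x t - x s = ∫ u in s..t, x' u)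
    (hint : IntegrableOn (fun t => (x' t) ^ 2 * t ^ (α / (1 - α))) (Set.Ioi 0))
    (hmax : ∃ t ∈ Set.Icc (1/2 : ℝ) 1, 2 * ((1/2) * (1 - α) / (1 - 2 * α)) ≤ x t) :
    ((1/2) * (1 - α) / (1 - 2 * α)) ≤
        (1/2) * ∫ t in Set.Ioi (0:ℝ), (x' t) ^ 2 * t ^ (α / (1 - α)) ∧
      ((1/2) * ∫ t in Set.Ioi (0:ℝ), (x' t) ^ 2 * t ^ (α / (1 - α)) =
          (1/2) * (1 - α) / (1 - 2 * α) ↔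
        ∀ t : ℝ, 0 ≤ t →
          x t = ((1 - α) / (1 - 2 * α)) * min (t ^ ((1 - 2 * α) / (1 - α))) 1) := by
  have h1α : (0:ℝ) < 1 - α := by linarith
  have h12α : (0:ℝ) < 1 - 2 * α := by linarith
  set β : ℝ := α / (1 - α) with hβdef
  set c : ℝ := (1 - α) / (1 - 2 * α) with hcdef
  have hβ0 : 0 < β := div_pos hα0 h1α
  have hβ1 : β < 1 := (div_lt_one h1α).2 (by linarith)
  have h1mβ : (0:ℝ) < 1 - β := by linarith
  have hexp : (1 - 2 * α) / (1 - α) = 1 - β := by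
    rw [hβdef]; field_simp; ring
  have hc0 : 0 < c := div_pos h1α h12α
  have hc1β : c * (1 - β) = 1 := by
    rw [hcdef, hβdef, one_sub_div h1α.ne', div_mul_div_comm,
      div_eq_one_iff_eq (mul_pos h12α h1α).ne']; ring
  have h2c : (1/2) * (1 - α) / (1 - 2 * α) = c / 2 := by rw [hcdef]; ring
  rw [hexp, h2c]
  -- basic facts
  have hg_nonneg : ∀ᵐ t ∂volume.restrict (Ioi (0:ℝ)), 0 ≤ x' t ^ 2 * t ^ β := by
    filter_upwards [ae_restrict_mem measurableSet_Ioi] with t ht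
    exact mul_nonneg (sq_nonneg _) (Real.rpow_nonneg (le_of_lt ht) _)
  have F2 : ∀ a b : ℝ, IntegrableOn (fun u : ℝ => u ^ (-β)) (Ioc a b) := by
    intro a b
    rcases le_or_gt a b with h | h
    · have := intervalIntegral.intervalIntegrable_rpow' (a := a) (b := b) (show (-1:ℝ) < -β by linarith)
      rwa [intervalIntegrable_iff, uIoc_of_le h] at this
    · rw [Ioc_eq_empty (not_lt.2 h.le)]; exact integrableOn_empty
  have F3 : ∀ a b : ℝ, a ≤ b → ∫ u in Ioc a b, u ^ (-β) =
      (b ^ (1 - β) - a ^ (1 - β)) / (1 - β) := by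
    intro a b hab
    rw [← intervalIntegral.integral_of_le hab]
    rw [show (∫ u in a..b, u ^ (-β)) = (b ^ (-β + 1) - a ^ (-β + 1)) / (-β + 1) from
      integral_rpow (h := Or.inl (show (-1:ℝ) < -β by linarith))]
    rw [show -β + 1 = 1 - β from by ring]
  have F4 : ∀ a b : ℝ, 0 ≤ a → a ≤ b → x b ≠ x a → IntegrableOn x' (Ioc a b) := by
    intro a b ha hab hne
    by_contra hcon
    have h1 : ¬ IntervalIntegrable x' volume a b := by
      rw [intervalIntegrable_iff, uIoc_of_le hab]; exact hcon
    have h2 := hftc a b ha hab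
    rw [intervalIntegral.integral_undef h1] at h2
    exact hne (by linarith)
  -- the key identity
  have F5 : ∀ T : ℝ, 0 < T → IntegrableOn x' (Ioc 0 T) →
      ((∫ t in Ioc 0 T, x' t ^ 2 * t ^ β)
        = (∫ t in Ioc 0 T, (x' t * t ^ (β/2) - t ^ (-(β/2))) ^ 2)
          + 2 * x T - T ^ (1 - β) / (1 - β)
      ∧ 0 ≤ ∫ t in Ioc 0 T, (x' t * t ^ (β/2) - t ^ (-(β/2))) ^ 2
      ∧ IntegrableOn (fun t => (x' t * t ^ (β/2) - t ^ (-(β/2))) ^ 2) (Ioc 0 T)) := by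
    intro T hT hx'T
    have hxT : ∫ t in Ioc 0 T, x' t = x T := by
      have h := hftc 0 T le_rfl hT.le
      rw [intervalIntegral.integral_of_le hT.le, hx0, sub_zero] at h
      exact h.symm
    have hgT : IntegrableOn (fun t => x' t ^ 2 * t ^ β) (Ioc 0 T) :=
      hint.mono_set (fun u hu => hu.1)
    have hrT := F2 0 T
    have hEq : EqOn (fun t => (x' t * t ^ (β/2) - t ^ (-(β/2))) ^ 2)
        (fun t => x' t ^ 2 * t ^ β - (2 * x' t - t ^ (-β))) (Ioc 0 T) := by
      intro t ht
      have ht0 : (0:ℝ) < t := ht.1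
      have h1 : t ^ (β/2) * t ^ (β/2) = t ^ β := by
        rw [← Real.rpow_add ht0]; ring_nf
      have h2 : t ^ (-(β/2)) * t ^ (-(β/2)) = t ^ (-β) := by
        rw [← Real.rpow_add ht0]; ring_nf
      have h3 : t ^ (β/2) * t ^ (-(β/2)) = 1 := by
        rw [← Real.rpow_add ht0]; simp
      simp only
      have expand : (x' t * t ^ (β/2) - t ^ (-(β/2))) ^ 2
          = x' t ^ 2 * (t ^ (β/2) * t ^ (β/2))
            - 2 * x' t * (t ^ (β/2) * t ^ (-(β/2)))
            + t ^ (-(β/2)) * t ^ (-(β/2)) := by ring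
      rw [expand, h1, h2, h3]; ring
    have hRHSint : IntegrableOn
        (fun t => x' t ^ 2 * t ^ β - (2 * x' t - t ^ (-β))) (Ioc 0 T) :=
      hgT.sub ((hx'T.const_mul 2).sub hrT)
    have hsq_int : IntegrableOn
        (fun t => (x' t * t ^ (β/2) - t ^ (-(β/2))) ^ 2) (Ioc 0 T) :=
      (hRHSint.congr_fun hEq.symm measurableSet_Ioc)
    have hval : ∫ t in Ioc 0 T, (x' t * t ^ (β/2) - t ^ (-(β/2))) ^ 2
        = (∫ t in Ioc 0 T, x' t ^ 2 * t ^ β)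
          - (2 * ∫ t in Ioc 0 T, x' t) + ∫ t in Ioc 0 T, t ^ (-β) := by
      have h2int : Integrable (fun t : ℝ => 2 * x' t - t ^ (-β))
          (volume.restrict (Ioc 0 T)) := (hx'T.const_mul 2).sub hrT
      rw [setIntegral_congr_fun measurableSet_Ioc hEq,
        integral_sub hgT h2int,
        integral_sub (hx'T.const_mul 2) hrT, integral_const_mul]
      ring
    have hrval : ∫ t in Ioc 0 T, (fun u : ℝ => u ^ (-β)) t = T ^ (1 - β) / (1 - β) := by
      rw [F3 0 T hT.le, Real.zero_rpow (by linarith), sub_zero]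
    refine ⟨?_, setIntegral_nonneg measurableSet_Ioc (fun t _ => sq_nonneg _), hsq_int⟩
    rw [hval, hxT, hrval]; ring
  -- the maximality point
  obtain ⟨T, ⟨hThalf, hT1⟩, hxT⟩ := hmax
  have hxTc : c ≤ x T := by
    rw [show 2 * ((1/2) * (1 - α) / (1 - 2 * α)) = c from by rw [hcdef]; ring] at hxT
    exact hxT
  have hT0 : (0:ℝ) < T := lt_of_lt_of_le (by norm_num) hThalf
  have hx'T : IntegrableOn x' (Ioc 0 T) :=
    F4 0 T le_rfl hT0.le (by rw [hx0]; exact ne_of_gt (lt_of_lt_of_le hc0 hxTc))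
  obtain ⟨hid, hQnn, hQint⟩ := F5 T hT0 hx'T
  have hTpow : T ^ (1 - β) ≤ 1 := Real.rpow_le_one hT0.le hT1 h1mβ.le
  have hdle : T ^ (1 - β) / (1 - β) ≤ c := by
    rw [div_le_iff₀ h1mβ]
    linarith
  have hIocT : c ≤ ∫ t in Ioc 0 T, x' t ^ 2 * t ^ β := by
    rw [hid]; linarith
  have hmono : (∫ t in Ioc 0 T, x' t ^ 2 * t ^ β) ≤ ∫ t in Ioi 0, x' t ^ 2 * t ^ β :=
    setIntegral_mono_set hint hg_nonneg (HasSubset.Subset.eventuallyLE Ioc_subset_Ioi_self)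
  have part1 : c ≤ ∫ t in Ioi 0, x' t ^ 2 * t ^ β := le_trans hIocT hmono
  constructor
  · linarith
  constructor
  · -- forward direction
    intro heq
    have htot : ∫ t in Ioi (0:ℝ), x' t ^ 2 * t ^ β = c := by linarith
    have hsplit : ∫ t in Ioi (0:ℝ), x' t ^ 2 * t ^ β
        = (∫ t in Ioc 0 T, x' t ^ 2 * t ^ β) + ∫ t in Ioi T, x' t ^ 2 * t ^ β := by
      have hd : Disjoint (Ioc (0:ℝ) T) (Ioi T) := by
        apply Set.disjoint_left.2
        intro u hu hu'
        exact absurd hu.2 (not_le.2 hu')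
      have := setIntegral_union hd measurableSet_Ioi
        (hint.mono_set (fun u hu => hu.1))
        (hint.mono_set (Ioi_subset_Ioi hT0.le))
        (f := fun t => x' t ^ 2 * t ^ β) (μ := volume)
      rwa [Ioc_union_Ioi_eq_Ioi hT0.le] at this
    have hRnn : 0 ≤ ∫ t in Ioi T, x' t ^ 2 * t ^ β :=
      setIntegral_nonneg measurableSet_Ioi
        (fun t ht => mul_nonneg (sq_nonneg _) (Real.rpow_nonneg (le_of_lt (hT0.trans ht)) _))
    have hQ0 : ∫ t in Ioc 0 T, (x' t * t ^ (β/2) - t ^ (-(β/2))) ^ 2 = 0 := by linarith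
    have hR0 : ∫ t in Ioi T, x' t ^ 2 * t ^ β = 0 := by linarith
    have hdeq : T ^ (1 - β) / (1 - β) = c := by linarith
    have hTpow1 : T ^ (1 - β) = 1 := by
      rw [div_eq_iff (ne_of_gt h1mβ)] at hdeq
      linarith
    have hTeq : T = 1 := by
      by_contra h
      have hlt : T < 1 := lt_of_le_of_ne hT1 h
      exact absurd hTpow1 (ne_of_lt (Real.rpow_lt_one hT0.le hlt h1mβ))
    subst hTeq
    -- a.e. identities
    have hQae : ∀ᵐ t ∂volume.restrict (Ioc (0:ℝ) 1), x' t = t ^ (-β) := by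
      have h1 := (setIntegral_eq_zero_iff_of_nonneg_ae
        (Filter.Eventually.of_forall (fun t => sq_nonneg _)) hQint).mp hQ0
      filter_upwards [h1, ae_restrict_mem measurableSet_Ioc] with t h2 h3
      have ht0 : (0:ℝ) < t := h3.1
      have h4 : x' t * t ^ (β/2) - t ^ (-(β/2)) = 0 := by
        have := pow_eq_zero_iff (n := 2) (by norm_num) |>.mp h2
        exact this
      have e1 : t ^ (β/2) * t ^ (-(β/2)) = 1 := by
        rw [← Real.rpow_add ht0]; simp
      have e2 : t ^ (-(β/2)) * t ^ (-(β/2)) = t ^ (-β) := by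
        rw [← Real.rpow_add ht0]; ring_nf
      calc x' t = x' t * (t ^ (β/2) * t ^ (-(β/2))) := by rw [e1]; ring
      _ = (x' t * t ^ (β/2)) * t ^ (-(β/2)) := by ring
      _ = t ^ (-(β/2)) * t ^ (-(β/2)) := by rw [show x' t * t ^ (β/2) = t ^ (-(β/2)) from by linarith]
      _ = t ^ (-β) := e2
    have hRae : ∀ᵐ t ∂volume.restrict (Ioi (1:ℝ)), x' t = 0 := by
      have h1 := (setIntegral_eq_zero_iff_of_nonneg_ae
        (by
          filter_upwards [ae_restrict_mem measurableSet_Ioi] with t ht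
          exact mul_nonneg (sq_nonneg _) (Real.rpow_nonneg (by linarith [ht.out] : (0:ℝ) ≤ t) _))
        (hint.mono_set (Ioi_subset_Ioi (by norm_num)))).mp hR0
      filter_upwards [h1, ae_restrict_mem measurableSet_Ioi] with t h2 h3
      have ht0 : (0:ℝ) < t := lt_trans one_pos h3
      have htβ : (0:ℝ) < t ^ β := Real.rpow_pos_of_pos ht0 _
      have h4 : x' t ^ 2 = 0 ∨ t ^ β = 0 := mul_eq_zero.mp h2
      rcases h4 with h4 | h4
      · exact pow_eq_zero_iff (n := 2) (by norm_num) |>.mp h4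
      · exact absurd h4 (ne_of_gt htβ)
    -- conclude the formula for x
    have hxle : ∀ t : ℝ, 0 < t → t ≤ 1 → x t = c * t ^ (1 - β) := by
      intro t ht0 ht1
      have h := hftc 0 t le_rfl ht0.le
      rw [intervalIntegral.integral_of_le ht0.le, hx0, sub_zero] at h
      have hcongr : ∫ u in Ioc 0 t, x' u = ∫ u in Ioc 0 t, u ^ (-β) :=
        integral_congr_ae (ae_restrict_of_ae_restrict_of_subset
          (Ioc_subset_Ioc_right ht1) hQae)
      rw [h, hcongr, F3 0 t ht0.le, Real.zero_rpow (by linarith), sub_zero]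
      rw [div_eq_iff (ne_of_gt h1mβ)]
      linear_combination (-(t ^ (1 - β))) * hc1β
    intro t ht
    rcases eq_or_lt_of_le ht with h0 | ht0
    · rw [← h0, hx0, Real.zero_rpow (by linarith : (1 - β) ≠ 0)]
      norm_num
    rcases le_or_gt t 1 with h1 | h1
    · rw [hxle t ht0 h1, min_eq_left (Real.rpow_le_one ht0.le h1 h1mβ.le)]
    · have hx1 : x 1 = c := by
        rw [hxle 1 one_pos le_rfl, Real.one_rpow, mul_one]
      have h := hftc 1 t (by norm_num) h1.le
      rw [intervalIntegral.integral_of_le h1.le] at h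
      have hcongr : ∫ u in Ioc 1 t, x' u = ∫ u in Ioc 1 t, (0:ℝ) :=
        integral_congr_ae (ae_restrict_of_ae_restrict_of_subset
          (Ioc_subset_Ioi_self) hRae)
      rw [hcongr, integral_zero, hx1] at h
      rw [show x t = c from by linarith,
        min_eq_right (Real.one_le_rpow h1.le h1mβ.le), mul_one]
  · -- backward direction
    intro hz
    have hxpos : ∀ t : ℝ, 0 < t → 0 < x t := by
      intro t ht
      rw [hz t ht.le]
      exact mul_pos hc0 (lt_min (Real.rpow_pos_of_pos ht _) one_pos)
    have B2 : ∀ T : ℝ, 0 < T → IntegrableOn x' (Ioc 0 T) := fun T hT =>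
      F4 0 T le_rfl hT.le (by rw [hx0]; exact (hxpos T hT).ne')
    have B3 : ∀ a b : ℝ, 0 ≤ a → a ≤ b → ∫ u in Ioc a b, x' u = x b - x a := by
      intro a b ha hab
      have h := hftc a b ha hab
      rw [intervalIntegral.integral_of_le hab] at h
      exact h.symm
    have hz'mem : ∀ u : ℝ, u ≤ 1 → zprof β u = u ^ (-β) := fun u hu => zprof_of_le hu
    have hz'nmem : ∀ u : ℝ, 1 < u → zprof β u = 0 := fun u hu => zprof_of_gt hu
    have hz'aesm : ∀ a b : ℝ, 0 < a →
        AEStronglyMeasurable (zprof β) (volume.restrict (Ioc a b)) := by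
      intro a b ha
      unfold zprof
      apply AEStronglyMeasurable.indicator _ measurableSet_Iic
      apply ContinuousOn.aestronglyMeasurable _ measurableSet_Ioc
      exact continuousOn_id.rpow_const (fun u hu => Or.inl (ne_of_gt (ha.trans hu.1)))
    have hz'int : ∀ a b : ℝ, 0 < a → IntegrableOn (zprof β) (Ioc a b) := by
      intro a b ha
      apply Integrable.mono' (g := fun _ : ℝ => a ^ (-β))
        (integrableOn_const measure_Ioc_lt_top.ne) (hz'aesm a b ha)
      filter_upwards [ae_restrict_mem measurableSet_Ioc] with t ht
      rcases le_or_gt t 1 with h1 | h1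
      · rw [hz'mem t h1, Real.norm_eq_abs,
          abs_of_nonneg (Real.rpow_nonneg (le_of_lt (ha.trans ht.1)) _)]
        exact Real.rpow_le_rpow_of_nonpos ha ht.1.le (by linarith)
      · rw [hz'nmem t h1, norm_zero]
        exact Real.rpow_nonneg ha.le _
    have hxval1 : ∀ u : ℝ, 0 < u → u ≤ 1 → x u = c * u ^ (1 - β) := by
      intro u hu h1
      rw [hz u hu.le, min_eq_left (Real.rpow_le_one hu.le h1 h1mβ.le)]
    have hxval2 : ∀ u : ℝ, 1 ≤ u → x u = c := by
      intro u hu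
      rw [hz u (by linarith), min_eq_right (Real.one_le_rpow hu h1mβ.le), mul_one]
    have Bz1 : ∀ a b : ℝ, 0 ≤ a → a ≤ b → b ≤ 1 →
        ∫ u in Ioc a b, zprof β u = c * b ^ (1 - β) - c * a ^ (1 - β) := by
      intro a b ha hab hb1
      have heq : EqOn (zprof β) (fun u : ℝ => u ^ (-β)) (Ioc a b) := fun u hu =>
        hz'mem u (hu.2.trans hb1)
      rw [setIntegral_congr_fun measurableSet_Ioc heq, F3 a b hab,
        div_eq_iff (ne_of_gt h1mβ)]
      linear_combination (a ^ (1 - β) - b ^ (1 - β)) * hc1β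
    have Bz2 : ∀ a b : ℝ, 1 ≤ a → ∫ u in Ioc a b, zprof β u = 0 := by
      intro a b ha
      have heq : EqOn (zprof β) (fun _ : ℝ => (0:ℝ)) (Ioc a b) := fun u hu =>
        hz'nmem u (lt_of_le_of_lt ha hu.1)
      rw [setIntegral_congr_fun measurableSet_Ioc heq]
      simp
    have B4 : ∀ a b : ℝ, 0 < a → a ≤ b → ∫ u in Ioc a b, zprof β u = x b - x a := by
      intro a b ha hab
      rcases le_or_gt b 1 with hb1 | hb1
      · rw [Bz1 a b ha.le hab hb1, hxval1 b (ha.trans_le hab) hb1,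
          hxval1 a ha (hab.trans hb1)]
      rcases le_or_gt 1 a with ha1 | ha1
      · rw [Bz2 a b ha1, hxval2 b (ha1.trans hab), hxval2 a ha1, sub_self]
      · have hsplit : Ioc a b = Ioc a 1 ∪ Ioc 1 b :=
          (Ioc_union_Ioc_eq_Ioc ha1.le hb1.le).symm
        have hdisj : Disjoint (Ioc a (1:ℝ)) (Ioc (1:ℝ) b) := by
          apply Set.disjoint_left.2
          intro u hu hu'
          exact absurd hu.2 (not_le.2 hu'.1)
        rw [hsplit, setIntegral_union hdisj measurableSet_Ioc
          (hz'int a 1 ha) (hz'int 1 b one_pos),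
          Bz1 a 1 ha.le ha1.le le_rfl, Bz2 1 b le_rfl,
          hxval2 b hb1.le, hxval1 a ha ha1.le, Real.one_rpow, mul_one]
        ring
    have B5 : ∀ n : ℕ, x' =ᵐ[volume.restrict (Ioc ((n:ℝ)+1)⁻¹ ((n:ℝ)+1))] zprof β := by
      intro n
      have hn1 : (0:ℝ) < (n:ℝ) + 1 := by positivity
      have ha : (0:ℝ) < ((n:ℝ)+1)⁻¹ := by positivity
      apply aux_ae_eq_Ioc
        ((B2 ((n:ℝ)+1) hn1).mono_set (Ioc_subset_Ioc_left ha.le))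
        (hz'int _ _ ha)
      intro s t hs hst htb
      have hs0 : 0 < s := lt_of_lt_of_le ha hs
      rw [B3 s t hs0.le hst, B4 s t hs0 hst]
    have hcover : Ioi (0:ℝ) ⊆ ⋃ n : ℕ, Ioc ((n:ℝ)+1)⁻¹ ((n:ℝ)+1) := by
      intro t ht
      have ht0 : (0:ℝ) < t := ht
      obtain ⟨n, hn⟩ := exists_nat_gt (max t⁻¹ t)
      have h1 : t⁻¹ < (n:ℝ) + 1 := by
        have := le_max_left t⁻¹ t
        linarith
      have h2 : t ≤ (n:ℝ) + 1 := by
        have := le_max_right t⁻¹ t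
        linarith
      exact mem_iUnion.2 ⟨n, inv_lt_of_inv_lt₀ ht0 h1, h2⟩
    have B6 : x' =ᵐ[volume.restrict (Ioi (0:ℝ))] zprof β :=
      ae_restrict_of_ae_restrict_of_subset hcover ((ae_restrict_iUnion_iff _ _).2 B5)
    have B7 : ∫ t in Ioi (0:ℝ), x' t ^ 2 * t ^ β = ∫ t in Ioi (0:ℝ), zprof β t ^ 2 * t ^ β :=
      integral_congr_ae (B6.mono fun t ht => by dsimp only; rw [ht])
    have hz'sq1 : EqOn (fun t : ℝ => zprof β t ^ 2 * t ^ β) (fun u : ℝ => u ^ (-β)) (Ioc 0 1) := by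
      intro u hu
      have hu0 : (0:ℝ) < u := hu.1
      simp only
      rw [hz'mem u hu.2]
      rw [show (u ^ (-β)) ^ 2 * u ^ β = (u ^ (-β) * u ^ (-β)) * u ^ β from by ring,
        ← Real.rpow_add hu0, ← Real.rpow_add hu0]
      congr 1
      ring
    have hz'sq2 : EqOn (fun t : ℝ => zprof β t ^ 2 * t ^ β) (fun _ : ℝ => (0:ℝ)) (Ioi 1) := by
      intro u hu
      simp only
      rw [hz'nmem u hu]
      ring
    have hint1 : IntegrableOn (fun t : ℝ => zprof β t ^ 2 * t ^ β) (Ioc 0 1) :=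
      (F2 0 1).congr_fun hz'sq1.symm measurableSet_Ioc
    have hint2 : IntegrableOn (fun t : ℝ => zprof β t ^ 2 * t ^ β) (Ioi 1) := by
      apply IntegrableOn.congr_fun _ hz'sq2.symm measurableSet_Ioi
      exact integrableOn_zero
    have hdisj : Disjoint (Ioc (0:ℝ) 1) (Ioi (1:ℝ)) := by
      apply Set.disjoint_left.2
      intro u hu hu'
      exact absurd hu.2 (not_le.2 hu')
    have hunion := setIntegral_union hdisj measurableSet_Ioi hint1 hint2
      (f := fun t : ℝ => zprof β t ^ 2 * t ^ β) (μ := volume)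
    rw [Ioc_union_Ioi_eq_Ioi zero_le_one] at hunion
    have hval2 : ∫ t in Ioi (1:ℝ), zprof β t ^ 2 * t ^ β = 0 := by
      rw [setIntegral_congr_fun measurableSet_Ioi hz'sq2]
      simp
    have hval1 : ∫ t in Ioc (0:ℝ) 1, zprof β t ^ 2 * t ^ β = c := by
      rw [setIntegral_congr_fun measurableSet_Ioc hz'sq1, F3 0 1 zero_le_one,
        Real.one_rpow, Real.zero_rpow (ne_of_gt h1mβ), div_eq_iff (ne_of_gt h1mβ)]
      linarith
    rw [B7, hunion, hval1, hval2]
    ring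
end

section
/- Fix 0 ≤ α < 1 and, for 0 < t₁ < ∞, consider the functional J(x) = ∫_0^∞ x(t)^{α/(1-α)}·ψ(x'(t)) dt over nondecreasing absolutely continuous x : [0,∞) → [0,∞) with x(0) = 0, where ψ(t) = 1 − t + t log t. If x is nondecreasing, absolutely continuous, and δ ∈ (0,1), t ≥ 0 satisfy ε := x(t+δ) − x(t) ≥ 2e·δ^{1/2}, then J(x) ≥ (ε/2)^{1/(1-α)}·log(ε/(2eδ)) and consequently x(t+δ) − x(t) ≤ max(2·(J(x)/log δ^{-1/2})^{1-α}, 2e·δ^{1/2}). In particular the sublevel sets {J ≤ η} are uniformly equicontinuous. -/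
open MeasureTheory Set Metric

private lemma psi_tangent17 {s m : ℝ} (hs : 0 ≤ s) (hm : 0 < m) :
    1 - m + s * Real.log m ≤ 1 - s + s * Real.log s := by
  rcases hs.lt_or_eq with hs | hs
  · have h := Real.log_le_sub_one_of_pos (div_pos hm hs)
    rw [Real.log_div hm.ne' hs.ne'] at h
    have := mul_le_mul_of_nonneg_left h hs.le
    have hms : s * (m / s) = m := by field_simp
    nlinarith
  · simp [← hs]; linarith

private lemma psi_nonneg17 {s : ℝ} (hs : 0 ≤ s) : 0 ≤ 1 - s + s * Real.log s := by
  have := psi_tangent17 hs one_pos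
  simpa using this.trans_eq' (by simp)

private lemma star17 (g : ℝ → ℝ) (c : ℝ) (hg : IntegrableOn g (Icc 0 c))
    (h : ∀ s u : ℝ, 0 ≤ s → s ≤ u → u ≤ c → 0 ≤ ∫ v in s..u, g v) :
    ∀ᵐ u, u ∈ Ioo 0 c → 0 ≤ g u := by
  set G : ℝ → ℝ := (Icc 0 c).indicator g with hG
  have hGint : Integrable G := (integrable_indicator_iff measurableSet_Icc).2 hg
  have hloc : LocallyIntegrable G := hGint.locallyIntegrable
  filter_upwards [IsUnifLocDoublingMeasure.ae_tendsto_average (μ := volume) hloc 1]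
    with u hu huI
  have hlim : Filter.Tendsto (fun r => ⨍ y in closedBall u r, G y) (nhdsWithin 0 (Ioi 0)) (nhds (G u)) := by
    apply hu (fun _ => u) id
    · exact Filter.tendsto_id
    · filter_upwards [self_mem_nhdsWithin] with r (hr : r ∈ Ioi (0:ℝ))
      simpa using (le_of_lt hr)
  have hGu : G u = g u := by
    rw [hG, indicator_of_mem (Ioo_subset_Icc_self huI)]
  rw [hGu] at hlim
  refine ge_of_tendsto hlim ?_
  have hev : ∀ᶠ r in nhdsWithin (0:ℝ) (Ioi 0), r < min u (c - u) := by
    apply eventually_nhdsWithin_of_eventually_nhds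
    exact eventually_lt_nhds (lt_min huI.1 (by linarith [huI.2]))
  filter_upwards [hev, self_mem_nhdsWithin] with r hr (hr0 : r ∈ Ioi (0:ℝ))
  have hr0' : (0:ℝ) < r := hr0
  have hrm := lt_min_iff.1 hr
  have hsub : Icc (u - r) (u + r) ⊆ Icc 0 c :=
    Icc_subset_Icc (by linarith [hrm.1]) (by linarith [hrm.2])
  have hieq : ∫ y in closedBall u r, G y = ∫ v in (u-r)..(u+r), g v := by
    rw [Real.closedBall_eq_Icc,
      setIntegral_congr_fun measurableSet_Icc (fun y hy => indicator_of_mem (hsub hy) g),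
      integral_Icc_eq_integral_Ioc, ← intervalIntegral.integral_of_le (by linarith : u - r ≤ u + r)]
  have hpos : 0 ≤ ∫ y in closedBall u r, G y := by
    rw [hieq]; exact h (u - r) (u + r) (by linarith [hrm.1]) (by linarith) (by linarith [hrm.2])
  rw [setAverage_eq]
  have h9 : (0:ℝ) ≤ (volume (closedBall u r)).toReal⁻¹ := by positivity
  rw [smul_eq_mul]; exact mul_nonneg h9 hpos

set_option maxHeartbeats 2000000 in
/-- Modulus-of-continuity estimate for the large deviation rate function `J`. -/
theorem stmt17 (α : ℝ) (hα0 : 0 ≤ α) (hα : α < 1)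
    (x x' : ℝ → ℝ) (hmono : MonotoneOn x (Set.Ici 0)) (hx0 : x 0 = 0)
    (hnn : ∀ t, 0 ≤ t → 0 ≤ x t)
    (hftc : ∀ s t : ℝ, 0 ≤ s → s ≤ t → x t - x s = ∫ u in s..t, x' u)
    (hint : IntegrableOn
      (fun t => x t ^ (α / (1 - α)) * (1 - x' t + x' t * Real.log (x' t))) (Set.Ioi 0))
    (J : ℝ)
    (hJ : J = ∫ t in Set.Ioi (0:ℝ),
      x t ^ (α / (1 - α)) * (1 - x' t + x' t * Real.log (x' t)))
    (δ t : ℝ) (hδ0 : 0 < δ) (hδ1 : δ < 1) (ht : 0 ≤ t) :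
    (2 * Real.exp 1 * δ ^ ((1:ℝ)/2) ≤ x (t + δ) - x t →
      ((x (t + δ) - x t) / 2) ^ (1 / (1 - α)) *
          Real.log ((x (t + δ) - x t) / (2 * Real.exp 1 * δ)) ≤ J) ∧
    x (t + δ) - x t ≤
      max (2 * (J / Real.log (δ ^ (-(1:ℝ)/2))) ^ (1 - α))
        (2 * Real.exp 1 * δ ^ ((1:ℝ)/2)) := by
  have h1α : 0 < 1 - α := by linarith
  set p := α / (1 - α) with hp
  have hp0 : 0 ≤ p := div_nonneg hα0 h1α.le
  set b := t + δ with hbdef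
  set ε := x b - x t with hεdef
  have htb : t < b := by rw [hbdef]; linarith
  have hb0 : 0 ≤ b := by linarith
  have hxt0 : 0 ≤ x t := hnn t ht
  -- Part 1
  have key : 2 * Real.exp 1 * δ ^ ((1:ℝ)/2) ≤ ε →
      (ε / 2) ^ (1 / (1 - α)) * Real.log (ε / (2 * Real.exp 1 * δ)) ≤ J := by
    intro h
    have hεpos : 0 < ε := lt_of_lt_of_le (by positivity) h
    have hxb : 0 < x b := by rw [hεdef] at hεpos; linarith
    -- local integrability of x'
    have hloc : ∀ u, b ≤ u → IntervalIntegrable x' volume 0 u := by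
      intro u hu
      by_contra hni
      have h0 := hftc 0 u le_rfl (hb0.trans hu)
      rw [intervalIntegral.integral_undef hni, hx0, sub_zero] at h0
      have hxu : x b ≤ x u := hmono hb0 (hb0.trans hu) hu
      linarith
    -- x' ≥ 0 a.e. on Ioi 0
    have hae : ∀ᵐ u, u ∈ Ioi (0:ℝ) → 0 ≤ x' u := by
      have hN : ∀ N : ℕ, ∀ᵐ u, u ∈ Ioo 0 (b + N) → 0 ≤ x' u := by
        intro N
        have hbN : b ≤ b + N := le_add_of_nonneg_right (Nat.cast_nonneg N)
        refine star17 x' (b + N)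
          ((intervalIntegrable_iff_integrableOn_Icc_of_le (hb0.trans hbN)).1 (hloc _ hbN)) ?_
        intro s u hs hsu _
        rw [← hftc s u hs hsu]
        exact sub_nonneg.2 (hmono hs (hs.trans hsu) hsu)
      rw [← ae_all_iff] at hN
      filter_upwards [hN] with u hu huI
      obtain ⟨N, hN'⟩ := exists_nat_gt (u - b)
      exact hu N ⟨huI, by linarith⟩
    -- continuity of x on Icc 0 b
    have hii0b : IntervalIntegrable x' volume 0 b := hloc b le_rfl
    have hxeq : ∀ u ∈ Icc 0 b, x u = ∫ v in (0:ℝ)..u, x' v := by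
      intro u hu
      have h0 := hftc 0 u le_rfl hu.1
      rw [hx0, sub_zero] at h0
      exact h0
    have hcont : ContinuousOn x (Icc 0 b) := by
      have hc : ContinuousOn (fun u => ∫ v in (0:ℝ)..u, x' v) (Icc 0 b) := by
        have := intervalIntegral.continuousOn_primitive_interval (a := 0) (b := b)
          (f := x') (μ := volume) ?_
        · rwa [uIcc_of_le hb0] at this
        · rw [uIcc_of_le hb0]
          exact (intervalIntegrable_iff_integrableOn_Icc_of_le hb0).1 hii0b
      exact ContinuousOn.congr hc hxeq
    -- intermediate value
    have hmem : x t + ε / 2 ∈ Icc (x t) (x b) := ⟨by linarith, by rw [hεdef]; linarith⟩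
    obtain ⟨a, haI, hxa⟩ := intermediate_value_Icc htb.le
      (hcont.mono (Icc_subset_Icc ht le_rfl)) hmem
    have ha0 : 0 ≤ a := ht.trans haI.1
    have hab : a < b := by
      rcases haI.2.lt_or_eq with h' | h'
      · exact h'
      · exfalso
        rw [h'] at hxa
        rw [hεdef] at hxa
        linarith
    set d := b - a with hddef
    have hd0 : 0 < d := by rw [hddef]; linarith
    have hdδ : d ≤ δ := by
      have := haI.1
      rw [hddef, hbdef]; linarith
    set m := ε / 2 / d with hmdef
    have hm0 : 0 < m := by positivity
    -- integral of x' over Ioc a b equals ε/2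
    have hii : IntervalIntegrable x' volume a b :=
      (hloc b le_rfl).mono_set (by rw [uIcc_of_le hab.le, uIcc_of_le hb0]; exact Icc_subset_Icc ha0 le_rfl)
    have hIOn : IntegrableOn x' (Ioc a b) := hii.1
    have hIab : ∫ v in Ioc a b, x' v = ε / 2 := by
      rw [← intervalIntegral.integral_of_le hab.le]
      have h0 := hftc a b ha0 hab.le
      rw [hxa, hεdef] at h0
      linarith
    -- integrand
    set f : ℝ → ℝ := fun u => x u ^ p * (1 - x' u + x' u * Real.log (x' u)) with hfdef
    have hfint : IntegrableOn f (Ioi 0) := hint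
    have hf0 : 0 ≤ᵐ[volume.restrict (Ioi (0:ℝ))] f := by
      rw [Filter.EventuallyLE, ae_restrict_iff' measurableSet_Ioi]
      filter_upwards [hae] with u hu huI
      exact mul_nonneg (Real.rpow_nonneg (hnn u (le_of_lt huI)) p) (psi_nonneg17 (hu huI))
    have hsubset : Ioc a b ⊆ Ioi (0:ℝ) := fun u hu => lt_of_le_of_lt ha0 hu.1
    -- pointwise lower bound on Ioc a b
    set C1 : ℝ := (ε/2) ^ p * (1 - m) with hC1
    set C2 : ℝ := (ε/2) ^ p * Real.log m with hC2
    have hptwise : (fun u => C1 + C2 * x' u) ≤ᵐ[volume.restrict (Ioc a b)] f := by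
      rw [Filter.EventuallyLE, ae_restrict_iff' measurableSet_Ioc]
      filter_upwards [hae] with u hu huI
      have hx'u : 0 ≤ x' u := hu (hsubset huI)
      have hxu : ε / 2 ≤ x u := by
        have h1 : x a ≤ x u := hmono ha0 (ha0.trans huI.1.le) huI.1.le
        rw [hxa] at h1; linarith
      have h5 : (ε/2) ^ p ≤ (x u) ^ p :=
        Real.rpow_le_rpow (by positivity) hxu hp0
      have h6 : 1 - m + x' u * Real.log m ≤ 1 - x' u + x' u * Real.log (x' u) :=
        psi_tangent17 hx'u hm0
      have h7 : 0 ≤ 1 - x' u + x' u * Real.log (x' u) := psi_nonneg17 hx'u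
      have h8 : (ε/2) ^ p * (1 - m + x' u * Real.log m) ≤ (ε/2) ^ p * (1 - x' u + x' u * Real.log (x' u)) :=
        mul_le_mul_of_nonneg_left h6 (by positivity)
      have h9 : (ε/2) ^ p * (1 - x' u + x' u * Real.log (x' u)) ≤ x u ^ p * (1 - x' u + x' u * Real.log (x' u)) :=
        mul_le_mul_of_nonneg_right h5 h7
      have h10 : C1 + C2 * x' u = (ε/2) ^ p * (1 - m + x' u * Real.log m) := by
        rw [hC1, hC2]; ring
      rw [hfdef, h10]
      exact h8.trans h9
    -- integrate
    have hlin_int : Integrable (fun u => C1 + C2 * x' u) (volume.restrict (Ioc a b)) :=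
      (integrable_const C1).add (hIOn.const_mul C2)
    have hmono_int : ∫ u in Ioc a b, (C1 + C2 * x' u) ≤ ∫ u in Ioc a b, f u :=
      integral_mono_ae hlin_int (hfint.mono_set hsubset) hptwise
    have hvol : (volume (Ioc a b)).toReal = d := by
      rw [Real.volume_Ioc, ENNReal.toReal_ofReal (by linarith : (0:ℝ) ≤ b - a), hddef]
    have hconst : ∫ _u in Ioc a b, C1 = C1 * d := by
      rw [setIntegral_const, smul_eq_mul, measureReal_def, hvol, mul_comm]
    have hcm : ∫ u in Ioc a b, C2 * x' u = C2 * (ε/2) := by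
      rw [MeasureTheory.integral_const_mul, hIab]
    have hcomp : ∫ u in Ioc a b, (C1 + C2 * x' u) = C1 * d + C2 * (ε/2) := by
      rw [integral_add (integrable_const C1) (hIOn.const_mul C2), hconst, hcm]
    have hJle : ∫ u in Ioc a b, f u ≤ J := by
      rw [hJ]
      exact setIntegral_mono_set hfint hf0 (HasSubset.Subset.eventuallyLE hsubset)
    -- final numeric chain
    have hεp : (0:ℝ) < ε / 2 := by linarith
    have hlogm : Real.log m = Real.log (ε/2) - Real.log d := by
      rw [hmdef, Real.log_div hεp.ne' hd0.ne']
    have hlogd : Real.log d ≤ Real.log δ := Real.log_le_log hd0 hdδ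
    have hpe : p + 1 = 1/(1-α) := by
      rw [hp, div_add' _ _ _ h1α.ne']
      congr 1
      ring
    have hrpw : (ε/2) ^ (1/(1-α)) = (ε/2) ^ p * (ε/2) := by
      rw [← hpe, Real.rpow_add hεp p 1, Real.rpow_one]
    have hlog2 : Real.log (ε / (2 * Real.exp 1 * δ)) = Real.log (ε/2) - Real.log δ - 1 := by
      have he : ε / (2 * Real.exp 1 * δ) = (ε/2) / δ / Real.exp 1 := by
        rw [div_div, div_div]; ring_nf
      rw [he, Real.log_div (by positivity) (Real.exp_ne_zero 1),
        Real.log_div hεp.ne' hδ0.ne', Real.log_exp]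
    have hmd : m * d = ε / 2 := by rw [hmdef]; exact div_mul_cancel₀ _ hd0.ne'
    have habs : ∀ A D Mm LA Ld Lδ : ℝ, 0 < A → 0 < D → Mm * D = A → Ld ≤ Lδ →
        A * (LA - Lδ - 1) ≤ (1 - Mm) * D + (LA - Ld) * A := by
      intro A D Mm LA Ld Lδ hA hD hMD hLd
      nlinarith [mul_le_mul_of_nonneg_left hLd hA.le]
    have hinner : (ε/2) * (Real.log (ε/2) - Real.log δ - 1) ≤ (1 - m) * d + Real.log m * (ε/2) := by
      rw [hlogm]
      exact habs (ε/2) d m (Real.log (ε/2)) (Real.log d) (Real.log δ) hεp hd0 hmd hlogd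
    have hCring : C1 * d + C2 * (ε/2) = (ε/2) ^ p * ((1 - m) * d + Real.log m * (ε/2)) := by
      rw [hC1, hC2]; ring
    calc (ε/2) ^ (1/(1-α)) * Real.log (ε / (2 * Real.exp 1 * δ))
        = (ε/2) ^ p * ((ε/2) * (Real.log (ε/2) - Real.log δ - 1)) := by
          rw [hrpw, hlog2]; ring
      _ ≤ (ε/2) ^ p * ((1 - m) * d + Real.log m * (ε/2)) :=
          mul_le_mul_of_nonneg_left hinner (by positivity)
      _ = C1 * d + C2 * (ε/2) := hCring.symm
      _ = ∫ u in Ioc a b, (C1 + C2 * x' u) := hcomp.symm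
      _ ≤ ∫ u in Ioc a b, f u := hmono_int
      _ ≤ J := hJle
  refine ⟨key, ?_⟩
  rcases le_or_gt ε (2 * Real.exp 1 * δ ^ ((1:ℝ)/2)) with h | h
  · exact le_max_of_le_right h
  · have hk := key h.le
    have hεpos : 0 < ε := lt_trans (by positivity) h
    have hεp : (0:ℝ) < ε / 2 := by linarith
    have hlogδ : Real.log δ < 0 := Real.log_neg hδ0 hδ1
    set L := Real.log (δ ^ (-(1:ℝ)/2)) with hLdef
    have hL : L = (-(1:ℝ)/2) * Real.log δ := Real.log_rpow hδ0 _
    have hLpos : 0 < L := by rw [hL]; nlinarith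
    have hprod : δ ^ (-(1:ℝ)/2) * (2 * Real.exp 1 * δ) = 2 * Real.exp 1 * δ ^ ((1:ℝ)/2) := by
      rw [show ((1:ℝ)/2) = (-(1:ℝ)/2) + 1 by ring, Real.rpow_add hδ0, Real.rpow_one]
      ring
    have hquot : δ ^ (-(1:ℝ)/2) ≤ ε / (2 * Real.exp 1 * δ) := by
      rw [le_div_iff₀ (by positivity), hprod]
      exact h.le
    have hlogle : L ≤ Real.log (ε / (2 * Real.exp 1 * δ)) :=
      Real.log_le_log (by positivity) hquot
    have h2 : (ε/2) ^ (1/(1-α)) * L ≤ J :=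
      le_trans (mul_le_mul_of_nonneg_left hlogle (by positivity)) hk
    have h3 : (ε/2) ^ (1/(1-α)) ≤ J / L := (le_div_iff₀ hLpos).2 h2
    have h4 : ε/2 ≤ (J / L) ^ (1-α) := by
      have h5 : ((ε/2) ^ (1/(1-α))) ^ (1-α) ≤ (J / L) ^ (1-α) :=
        Real.rpow_le_rpow (by positivity) h3 h1α.le
      rwa [← Real.rpow_mul hεp.le, show (1/(1-α))*(1-α) = 1 by field_simp,
        Real.rpow_one] at h5
    calc ε = 2 * (ε/2) := by ring
      _ ≤ 2 * (J / L) ^ (1-α) := by linarith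
      _ ≤ _ := le_max_left _ _
end
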